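/- Let M be a finitely generated Aₙ(K)-module, and let φ_M(t₁,t₂) and ψ_M(t) be, respectively, the bivariate characteristic polynomial and the Bernstein polynomial associated with the same finite system of generators of M. Then ψ_M(r) ≤ φ_M(r,r) ≤ ψ_M(2r) for all sufficiently large r ∈ ℤ; consequently deg ψ_M(t) = deg φ_M(t₁,t₂), and (for M ≠ 0) M belongs to the Bernstein class 𝓑ₙ if and only if deg φ_M(t₁,t₂) = n. -/

import Mathlib

open scoped BigOperators

set_option maxHeartbeats 1000000
set_option synthInstance.maxHeartbeats 400000

/-- The operator of multiplication by the variable `xᵢ` on `K[x₁,…,xₙ]`. -/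
noncomputable def mulX (K : Type*) [CommRing K] (n : ℕ) (i : Fin n) :
    Module.End K (MvPolynomial (Fin n) K) :=
  LinearMap.mulLeft K (MvPolynomial.X i)

/-- The partial differentiation operator `∂ᵢ` on `K[x₁,…,xₙ]`. -/
noncomputable def pdOp (K : Type*) [CommRing K] (n : ℕ) (i : Fin n) :
    Module.End K (MvPolynomial (Fin n) K) :=
  (MvPolynomial.pderiv (R := K) i).toLinearMap

/-- The Weyl algebra `Aₙ(K)`: the `K`-subalgebra of `End_K K[x₁,…,xₙ]`
generated by the multiplication operators `xᵢ` and the derivations `∂ᵢ`. -/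
noncomputable def WeylAlgebra (K : Type*) [CommRing K] (n : ℕ) :
    Subalgebra K (Module.End K (MvPolynomial (Fin n) K)) :=
  Algebra.adjoin K (Set.range (mulX K n) ∪ Set.range (pdOp K n))

/-- The monomial `x^α ∂^β` as an endomorphism of `K[x₁,…,xₙ]`. -/
noncomputable def wMonEnd (K : Type*) [CommRing K] (n : ℕ) (α β : Fin n → ℕ) :
    Module.End K (MvPolynomial (Fin n) K) :=
  (List.ofFn fun i => mulX K n i ^ α i).prod * (List.ofFn fun i => pdOp K n i ^ β i).prod

lemma wMonEnd_mem (K : Type*) [CommRing K] (n : ℕ) (α β : Fin n → ℕ) :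
    wMonEnd K n α β ∈ WeylAlgebra K n := by
  apply mul_mem
  · apply list_prod_mem
    intro D hD
    obtain ⟨i, rfl⟩ := List.mem_ofFn.mp hD
    exact pow_mem (Algebra.subset_adjoin (Set.mem_union_left _ (Set.mem_range_self i))) _
  · apply list_prod_mem
    intro D hD
    obtain ⟨i, rfl⟩ := List.mem_ofFn.mp hD
    exact pow_mem (Algebra.subset_adjoin (Set.mem_union_right _ (Set.mem_range_self i))) _

/-- The monomial `x^α ∂^β` as an element of the Weyl algebra. -/
noncomputable def wMon (K : Type*) [CommRing K] (n : ℕ) (α β : Fin n → ℕ) :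
    WeylAlgebra K n :=
  ⟨wMonEnd K n α β, wMonEnd_mem K n α β⟩

/-- The `r`-th component `W_r` of the Bernstein filtration of `Aₙ(K)`:
the `K`-span of the monomials `x^α ∂^β` with `|α| + |β| ≤ r`. -/
noncomputable def bernW (K : Type*) [Field K] (n : ℕ) (r : ℕ) :
    Submodule K (WeylAlgebra K n) :=
  Submodule.span K {D | ∃ α β : Fin n → ℕ,
    (∑ i, α i) + (∑ i, β i) ≤ r ∧ D = wMon K n α β}

/-- The natural (Bernstein) filtration `M_r = Σᵢ W_r gᵢ` of a module over
the Weyl algebra associated with a system of generators `g`. -/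
noncomputable def bernFil (K : Type*) [Field K] (n : ℕ) (M : Type*) [AddCommGroup M]
    [Module (WeylAlgebra K n) M] [Module K M] [IsScalarTower K (WeylAlgebra K n) M]
    (p : ℕ) (g : Fin p → M) (r : ℕ) : Submodule K M :=
  Submodule.span K {x | ∃ (α β : Fin n → ℕ) (j : Fin p),
    (∑ i, α i) + (∑ i, β i) ≤ r ∧ x = wMon K n α β • g j}

/-- The natural bifiltration `M_{rs} = Σᵢ W_{rs} gᵢ`. -/
noncomputable def biFil (K : Type*) [Field K] (n : ℕ) (M : Type*) [AddCommGroup M]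
    [Module (WeylAlgebra K n) M] [Module K M] [IsScalarTower K (WeylAlgebra K n) M]
    (p : ℕ) (g : Fin p → M) (r s : ℕ) : Submodule K M :=
  Submodule.span K {x | ∃ (α β : Fin n → ℕ) (j : Fin p),
    (∑ i, α i) ≤ r ∧ (∑ i, β i) ≤ s ∧ x = wMon K n α β • g j}

/-- A module `M` belongs to the Bernstein class `𝓑ₙ` if it is finitely
generated over `Aₙ(K)` and the Bernstein polynomial associated with some
(equivalently, by invariance, any) finite system of generators has degree `n`. -/
def InBernsteinClass (K : Type*) [Field K] [CharZero K] (n : ℕ)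
    (M : Type*) [AddCommGroup M] [Module (WeylAlgebra K n) M]
    [Module K M] [IsScalarTower K (WeylAlgebra K n) M] : Prop :=
  ∃ (p : ℕ) (g : Fin p → M) (ψ : Polynomial ℚ),
    Submodule.span (WeylAlgebra K n) (Set.range g) = ⊤ ∧
    (∃ r₀ : ℕ, ∀ r : ℕ, r₀ ≤ r →
      ψ.eval (r : ℚ) = Module.finrank K (bernFil K n M p g r)) ∧
    ψ.natDegree = n

open Polynomial Filter

lemma auxPOS (p : ℚ[X]) (hp : 0 < p.leadingCoeff) :
    ∃ N : ℕ, ∀ k : ℕ, N ≤ k → 0 < p.eval (k : ℚ) := by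
  have hp0 : p ≠ 0 := fun h => by simp [h] at hp
  rcases eq_or_lt_of_le (Nat.zero_le p.natDegree) with hd | hd
  · refine ⟨0, fun k _ => ?_⟩
    have hc : p = C (p.coeff 0) := Polynomial.eq_C_of_natDegree_eq_zero hd.symm
    have hlc : p.leadingCoeff = p.coeff 0 := by rw [Polynomial.leadingCoeff, ← hd]
    rw [hc]; simp only [eval_C]; rwa [hlc] at hp
  · set P : Polynomial ℝ := p.map (Rat.castHom ℝ) with hP
    have hmap : ∀ x : ℚ, P.eval ((x : ℚ) : ℝ) = ((p.eval x : ℚ) : ℝ) := by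
      intro x
      rw [hP, Polynomial.eval_map]
      exact Polynomial.eval₂_at_apply (Rat.castHom ℝ) x
    have hdeg : 0 < P.degree := by
      rw [hP, Polynomial.degree_map_eq_of_injective (Rat.castHom ℝ).injective]
      exact Polynomial.natDegree_pos_iff_degree_pos.mp hd
    have hlc : 0 ≤ P.leadingCoeff := by
      rw [hP, Polynomial.leadingCoeff_map_of_injective (Rat.castHom ℝ).injective]
      have : ((0:ℚ):ℝ) ≤ ((p.leadingCoeff : ℚ) : ℝ) := by exact_mod_cast hp.le
      simpa using this
    have htend : Tendsto (fun x : ℝ => P.eval x) atTop atTop :=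
      P.tendsto_atTop_of_leadingCoeff_nonneg hdeg hlc
    have htend2 : Tendsto (fun k : ℕ => P.eval (k : ℝ)) atTop atTop :=
      htend.comp tendsto_natCast_atTop_atTop
    have hev : ∀ᶠ k : ℕ in atTop, 0 < P.eval (k : ℝ) := htend2.eventually_gt_atTop 0
    obtain ⟨N, hN⟩ := eventually_atTop.mp hev
    refine ⟨N, fun k hk => ?_⟩
    have h1 := hN k hk
    have h2 : ((0 : ℚ) : ℝ) < ((p.eval (k : ℚ) : ℚ) : ℝ) := by
      rw [← hmap (k : ℚ)]; push_cast; simpa using h1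
    exact_mod_cast h2

lemma auxSIGN (p : ℚ[X]) (hp0 : p ≠ 0) (N : ℕ) (h : ∀ k : ℕ, N ≤ k → 0 ≤ p.eval (k : ℚ)) :
    0 < p.leadingCoeff := by
  rcases lt_trichotomy p.leadingCoeff 0 with hlt | heq | hgt
  · exfalso
    have hneg : 0 < (-p).leadingCoeff := by
      rw [Polynomial.leadingCoeff_neg]; linarith
    obtain ⟨N', hN'⟩ := auxPOS (-p) hneg
    have h1 := hN' (max N N') (le_max_right _ _)
    have h2 := h (max N N') (le_max_left _ _)
    rw [Polynomial.eval_neg] at h1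
    linarith
  · exact absurd (Polynomial.leadingCoeff_eq_zero.mp heq) hp0
  · exact hgt

lemma auxDEG (p q : ℚ[X]) (N : ℕ)
    (h : ∀ k : ℕ, N ≤ k → 0 ≤ p.eval (k : ℚ) ∧ p.eval (k : ℚ) ≤ q.eval (k : ℚ)) :
    p.natDegree ≤ q.natDegree := by
  by_contra hcon
  push_neg at hcon
  have hp0 : p ≠ 0 := by
    intro h0; rw [h0] at hcon; simp at hcon
  have hplc : 0 < p.leadingCoeff := auxSIGN p hp0 N (fun k hk => (h k hk).1)
  set r := p - q with hr
  have hdlt : q.degree < p.degree := Polynomial.degree_lt_degree hcon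
  have hrlc : r.leadingCoeff = p.leadingCoeff := by
    rw [hr, sub_eq_add_neg]
    rw [Polynomial.leadingCoeff_add_of_degree_lt' (by rwa [Polynomial.degree_neg])]
  obtain ⟨N', hN'⟩ := auxPOS r (by rw [hrlc]; exact hplc)
  have h1 := hN' (max N N') (le_max_right _ _)
  have h2 := (h (max N N') (le_max_left _ _)).2
  rw [hr] at h1
  simp only [Polynomial.eval_sub] at h1
  linarith

lemma auxZERO (p : ℚ[X]) (N : ℕ) (h : ∀ k : ℕ, N ≤ k → p.eval (k : ℚ) = 0) : p = 0 := by
  apply Polynomial.eq_zero_of_infinite_isRoot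
  apply Set.Infinite.mono (s := (fun k : ℕ => ((N + k : ℕ) : ℚ)) '' Set.univ)
  · rintro x ⟨k, -, rfl⟩
    exact h (N + k) (Nat.le_add_right _ _)
  · apply Set.Infinite.image
    · intro a _ b _ hab
      simp only at hab
      have : (N + a : ℕ) = (N + b : ℕ) := by exact_mod_cast hab
      omega
    · exact Set.infinite_univ


noncomputable def substDiag (u : ℕ) (φ : MvPolynomial (Fin 2) ℚ) : ℚ[X] :=
  MvPolynomial.eval₂ Polynomial.C ![Polynomial.C (u:ℚ) * Polynomial.X, Polynomial.X] φ

lemma substDiag_eval (u : ℕ) (φ : MvPolynomial (Fin 2) ℚ) (t : ℚ) :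
    (substDiag u φ).eval t = MvPolynomial.eval ![(u : ℚ) * t, t] φ := by
  unfold substDiag
  have h := MvPolynomial.eval₂_comp_left (Polynomial.evalRingHom t) Polynomial.C
    ![Polynomial.C (u:ℚ) * Polynomial.X, Polynomial.X] φ
  simp only [coe_evalRingHom] at h
  rw [h]
  rw [MvPolynomial.eval]
  congr 1
  · ext x; simp
  · funext i
    fin_cases i <;> simp

lemma substDiag_expand (u : ℕ) (φ : MvPolynomial (Fin 2) ℚ) :
    substDiag u φ = ∑ v ∈ φ.support,
      Polynomial.C (φ.coeff v * (u : ℚ) ^ (v 0)) * Polynomial.X ^ (v 0 + v 1) := by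
  unfold substDiag
  rw [MvPolynomial.eval₂_eq']
  apply Finset.sum_congr rfl
  intro v _
  rw [Fin.prod_univ_two]
  simp only [Matrix.cons_val_zero, Matrix.cons_val_one, Matrix.head_cons]
  rw [mul_pow, ← Polynomial.C_pow, map_mul]
  ring

lemma substDiag_natDegree_le (u : ℕ) (φ : MvPolynomial (Fin 2) ℚ) :
    (substDiag u φ).natDegree ≤ φ.totalDegree := by
  rw [substDiag_expand]
  apply Polynomial.natDegree_sum_le_of_forall_le
  intro v hv
  apply le_trans (Polynomial.natDegree_C_mul_le _ _)
  apply le_trans (Polynomial.natDegree_X_pow_le _)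
  have := MvPolynomial.le_totalDegree hv
  have hsum : (v.sum fun _ e => e) = v 0 + v 1 := by
    rw [Finsupp.sum_fintype]
    · exact Fin.sum_univ_two v
    · intro; rfl
  omega

lemma substDiag_coeff (u : ℕ) (φ : MvPolynomial (Fin 2) ℚ) (d : ℕ) :
    (substDiag u φ).coeff d = ∑ v ∈ φ.support.filter (fun v => v 0 + v 1 = d),
      φ.coeff v * (u : ℚ) ^ (v 0) := by
  rw [substDiag_expand, Polynomial.finset_sum_coeff]
  rw [Finset.sum_filter]
  apply Finset.sum_congr rfl
  intro v _
  rw [Polynomial.coeff_C_mul, Polynomial.coeff_X_pow]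
  by_cases h : v 0 + v 1 = d
  · simp [h]
  · simp only [h, if_false]
    rw [if_neg (fun h' => h h'.symm)]
    simp

lemma exists_good_u (φ : MvPolynomial (Fin 2) ℚ) (hφ : φ ≠ 0) :
    ∃ u : ℕ, 1 ≤ u ∧ (substDiag u φ).coeff φ.totalDegree ≠ 0 := by
  set d := φ.totalDegree with hd
  -- get v₀ in support attaining totalDegree
  have hsupp : φ.support.Nonempty := MvPolynomial.support_nonempty.mpr hφ
  obtain ⟨v₀, hv₀mem, hv₀⟩ := Finset.exists_mem_eq_sup φ.support hsupp
      (fun v => v.sum fun _ e => e)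
  have hv₀d : v₀ 0 + v₀ 1 = d := by
    have hsum : (v₀.sum fun _ e => e) = v₀ 0 + v₀ 1 := by
      rw [Finsupp.sum_fintype]
      · exact Fin.sum_univ_two v₀
      · intro; rfl
    rw [hd, MvPolynomial.totalDegree, hv₀, hsum]
  -- the auxiliary polynomial h
  set h : ℚ[X] := ∑ v ∈ φ.support.filter (fun v => v 0 + v 1 = d),
      Polynomial.C (φ.coeff v) * Polynomial.X ^ (v 0) with hh
  have hcoeff : ∀ u : ℕ, (substDiag u φ).coeff d = h.eval (u : ℚ) := by
    intro u
    rw [substDiag_coeff, hh, Polynomial.eval_finset_sum]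
    apply Finset.sum_congr rfl
    intro v _
    simp
  have hhne : h ≠ 0 := by
    intro h0
    have : h.coeff (v₀ 0) = 0 := by rw [h0]; simp
    rw [hh, Polynomial.finset_sum_coeff] at this
    rw [Finset.sum_eq_single v₀] at this
    · rw [Polynomial.coeff_C_mul, Polynomial.coeff_X_pow] at this
      simp only [if_pos rfl, if_pos trivial, mul_one] at this
      exact (MvPolynomial.mem_support_iff.mp hv₀mem) (by simpa using this)
    · intro v hv hvne
      rw [Polynomial.coeff_C_mul, Polynomial.coeff_X_pow]
      rw [Finset.mem_filter] at hv
      have : v 0 ≠ v₀ 0 := by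
        intro heq
        apply hvne
        have h2 : v 1 = v₀ 1 := by omega
        ext i
        fin_cases i
        · exact heq
        · exact h2
      simp [Ne.symm this]
    · intro hns
      rw [Finset.mem_filter] at hns
      exact absurd ⟨hv₀mem, hv₀d⟩ hns
  -- pick u
  by_contra hcon
  push_neg at hcon
  apply hhne
  apply Polynomial.eq_zero_of_infinite_isRoot
  apply Set.Infinite.mono (s := (fun k : ℕ => ((1 + k : ℕ) : ℚ)) '' Set.univ)
  · rintro x ⟨k, -, rfl⟩
    have := hcon (1 + k) (Nat.le_add_right _ _)
    rw [hcoeff] at this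
    exact this
  · apply Set.Infinite.image
    · intro a _ b _ hab
      simp only at hab
      have : (1 + a : ℕ) = (1 + b : ℕ) := by exact_mod_cast hab
      omega
    · exact Set.infinite_univ



lemma listOfFnPow_zero {Mo : Type*} [Monoid Mo] {N : ℕ} (f : Fin N → Mo) :
    (List.ofFn fun i => f i ^ (0 : ℕ)).prod = 1 := by
  apply List.prod_eq_one
  intro x hx
  obtain ⟨i, rfl⟩ := List.mem_ofFn.mp hx
  exact pow_zero _

lemma listOfFnPow_single {Mo : Type*} [Monoid Mo] : ∀ {N : ℕ} (f : Fin N → Mo) (i : Fin N),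
    (List.ofFn fun j => f j ^ (if j = i then 1 else 0 : ℕ)).prod = f i := by
  intro N
  induction N with
  | zero => exact fun f i => absurd i.2 (by omega)
  | succ N IH =>
    intro f i
    rw [List.ofFn_succ, List.prod_cons]
    rcases Fin.eq_zero_or_eq_succ i with hi | ⟨k, rfl⟩
    · subst hi
      have : (List.ofFn fun j : Fin N => f j.succ ^ (if j.succ = (0 : Fin (N+1)) then 1 else 0 : ℕ)).prod = 1 := by
        apply List.prod_eq_one
        intro x hx
        obtain ⟨j, rfl⟩ := List.mem_ofFn.mp hx
        simp [if_neg (Fin.succ_ne_zero j)]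
      rw [this, mul_one]
      simp
    · rw [if_neg (Fin.succ_ne_zero k).symm, pow_zero, one_mul]
      have := IH (fun j => f j.succ) k
      rw [← this]
      have he : (fun i : Fin N => f i.succ ^ (if i.succ = k.succ then 1 else 0 : ℕ))
          = fun j => f j.succ ^ (if j = k then 1 else 0 : ℕ) := by
        funext j
        simp [Fin.succ_inj]
      rw [he]

lemma listOfFnPow_add {Mo : Type*} [Monoid Mo] : ∀ {N : ℕ} (f : Fin N → Mo),
    (∀ i j, Commute (f i) (f j)) → ∀ (a b : Fin N → ℕ),
    (List.ofFn fun i => f i ^ (a i + b i)).prod =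
      (List.ofFn fun i => f i ^ a i).prod * (List.ofFn fun i => f i ^ b i).prod := by
  intro N
  induction N with
  | zero => intro f _ a b; simp
  | succ N IH =>
    intro f hf a b
    rw [List.ofFn_succ, List.ofFn_succ, List.ofFn_succ, List.prod_cons, List.prod_cons,
      List.prod_cons]
    rw [IH (fun j => f j.succ) (fun i j => hf i.succ j.succ) (fun j => a j.succ)
      (fun j => b j.succ)]
    have hcomm : Commute ((List.ofFn fun i : Fin N => f i.succ ^ a i.succ).prod) (f 0 ^ b 0) := by
      apply Commute.list_prod_left
      intro x hx
      obtain ⟨j, rfl⟩ := List.mem_ofFn.mp hx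
      exact (hf 0 j.succ).symm.pow_pow _ _
    rw [pow_add, mul_assoc, mul_assoc]
    congr 1
    rw [← mul_assoc, ← hcomm.eq, mul_assoc]

section Sec4
variable (K : Type*) [Field K] (n : ℕ)

/-- The product of `xᵢ^{αᵢ}` as an endomorphism. -/
noncomputable def xProd (α : Fin n → ℕ) : Module.End K (MvPolynomial (Fin n) K) :=
  (List.ofFn fun i => mulX K n i ^ α i).prod

/-- The product of `∂ᵢ^{βᵢ}` as an endomorphism. -/
noncomputable def dProd (β : Fin n → ℕ) : Module.End K (MvPolynomial (Fin n) K) :=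
  (List.ofFn fun i => pdOp K n i ^ β i).prod

lemma wMonEnd_eq (α β : Fin n → ℕ) : wMonEnd K n α β = xProd K n α * dProd K n β := rfl

lemma mulX_commute (i j : Fin n) : Commute (mulX K n i) (mulX K n j) := by
  apply LinearMap.ext
  intro p
  show MvPolynomial.X i * (MvPolynomial.X j * p) = MvPolynomial.X j * (MvPolynomial.X i * p)
  ring

lemma pdOp_commute (i j : Fin n) : Commute (pdOp K n i) (pdOp K n j) := by
  apply LinearMap.ext
  intro p
  show MvPolynomial.pderiv i (MvPolynomial.pderiv j p) =
    MvPolynomial.pderiv j (MvPolynomial.pderiv i p)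
  induction p using MvPolynomial.induction_on' with
  | monomial s a =>
    simp only [MvPolynomial.pderiv_monomial]
    by_cases hij : i = j
    · subst hij; rfl
    · congr 1
      · rw [tsub_right_comm]
      · rw [Finsupp.tsub_apply, Finsupp.tsub_apply,
          Finsupp.single_apply, Finsupp.single_apply,
          if_neg hij, if_neg (fun h => hij h.symm)]
        simp only [Nat.sub_zero]
        ring
  | add p q hp hq => simp [hp, hq]

lemma xProd_zero : xProd K n (fun _ => 0) = 1 := listOfFnPow_zero _

lemma dProd_zero : dProd K n (fun _ => 0) = 1 := listOfFnPow_zero _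

lemma xProd_add (a b : Fin n → ℕ) :
    xProd K n (a + b) = xProd K n a * xProd K n b :=
  listOfFnPow_add _ (mulX_commute K n) a b

lemma dProd_add (a b : Fin n → ℕ) :
    dProd K n (a + b) = dProd K n a * dProd K n b :=
  listOfFnPow_add _ (pdOp_commute K n) a b

lemma xProd_single (i : Fin n) :
    xProd K n (fun j => if j = i then 1 else 0) = mulX K n i := listOfFnPow_single _ i

lemma dProd_single (i : Fin n) :
    dProd K n (fun j => if j = i then 1 else 0) = pdOp K n i := listOfFnPow_single _ i

end Sec4

section Sec4c
variable (K : Type*) [Field K] (n : ℕ)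

lemma listMulLeft_prod (l : List (MvPolynomial (Fin n) K)) :
    (l.map (LinearMap.mulLeft K)).prod = LinearMap.mulLeft K l.prod := by
  induction l with
  | nil =>
    rw [List.map_nil, List.prod_nil, List.prod_nil, LinearMap.mulLeft_one]
    rfl
  | cons a t IH =>
    rw [List.map_cons, List.prod_cons, List.prod_cons, IH, LinearMap.mulLeft_mul]
    rfl

noncomputable def pMono (α : Fin n → ℕ) : MvPolynomial (Fin n) K :=
  ∏ i, MvPolynomial.X i ^ α i

lemma mulLeft_pow (a : MvPolynomial (Fin n) K) (k : ℕ) :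
    LinearMap.mulLeft K a ^ k = LinearMap.mulLeft K (a ^ k) := by
  induction k with
  | zero => rw [pow_zero, pow_zero, LinearMap.mulLeft_one]; rfl
  | succ k IH => rw [pow_succ, pow_succ, IH, LinearMap.mulLeft_mul]; rfl

lemma xProd_eq_mulLeft (α : Fin n → ℕ) :
    xProd K n α = LinearMap.mulLeft K (pMono K n α) := by
  unfold xProd pMono
  have h1 : (List.ofFn fun i => mulX K n i ^ α i)
      = (List.ofFn fun i => MvPolynomial.X (R := K) i ^ α i).map (LinearMap.mulLeft K) := by
    rw [List.map_ofFn]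
    congr 1
    funext i
    show LinearMap.mulLeft K (MvPolynomial.X i) ^ α i = _
    rw [mulLeft_pow]
    rfl
  rw [h1, listMulLeft_prod, List.prod_ofFn]

lemma pMono_eq_monomial (α : Fin n → ℕ) :
    pMono K n α = MvPolynomial.monomial (Finsupp.equivFunOnFinite.symm α) 1 := by
  rw [MvPolynomial.monomial_eq]
  rw [map_one, one_mul]
  rw [Finsupp.prod_fintype]
  · rfl
  · intro i; exact pow_zero _

lemma pderiv_pMono (i : Fin n) (α : Fin n → ℕ) :
    MvPolynomial.pderiv i (pMono K n α) =
      (α i : K) • pMono K n (Function.update α i (α i - 1)) := by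
  rw [pMono_eq_monomial, pMono_eq_monomial, MvPolynomial.pderiv_monomial]
  rw [MvPolynomial.smul_monomial]
  have hidx : (Finsupp.equivFunOnFinite.symm α - Finsupp.single i 1)
      = Finsupp.equivFunOnFinite.symm (Function.update α i (α i - 1)) := by
    ext j
    simp only [Finsupp.tsub_apply, Finsupp.equivFunOnFinite_symm_apply_apply,
      Finsupp.single_apply]
    by_cases hj : j = i
    · subst hj; simp
    · rw [if_neg (fun h => hj (Eq.symm h)), Nat.sub_zero,
        Function.update_of_ne hj]
  rw [hidx]
  congr 1
  simp [Finsupp.equivFunOnFinite_symm_apply_apply, mul_comm]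

/-- The fundamental commutation relation: `∂ᵢ x^α = x^α ∂ᵢ + αᵢ x^{α - eᵢ}`. -/
lemma pdOp_mul_xProd (i : Fin n) (α : Fin n → ℕ) :
    pdOp K n i * xProd K n α =
      xProd K n α * pdOp K n i +
        (α i : K) • xProd K n (Function.update α i (α i - 1)) := by
  rw [xProd_eq_mulLeft, xProd_eq_mulLeft]
  apply LinearMap.ext
  intro p
  show MvPolynomial.pderiv i (pMono K n α * p) = _
  rw [MvPolynomial.pderiv_mul, pderiv_pMono]
  simp only [LinearMap.add_apply, Module.End.mul_apply, LinearMap.smul_apply,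
    LinearMap.mulLeft_apply, smul_mul_assoc]
  rw [add_comm]
  rfl

end Sec4c

section Sec4d
variable (K : Type*) [Field K] (n : ℕ)

/-- `V_r`: the span of monomials of Bernstein degree at most `r`, at the level
of endomorphisms. -/
noncomputable def vSpan (r : ℕ) : Submodule K (Module.End K (MvPolynomial (Fin n) K)) :=
  Submodule.span K {D | ∃ α β : Fin n → ℕ, (∑ i, α i) + (∑ i, β i) ≤ r ∧ D = wMonEnd K n α β}

lemma vSpan_mono {r r' : ℕ} (h : r ≤ r') : vSpan K n r ≤ vSpan K n r' := by
  apply Submodule.span_mono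
  rintro D ⟨α, β, hd, rfl⟩
  exact ⟨α, β, le_trans hd h, rfl⟩

lemma wMonEnd_mem_vSpan {α β : Fin n → ℕ} {r : ℕ} (h : (∑ i, α i) + (∑ i, β i) ≤ r) :
    wMonEnd K n α β ∈ vSpan K n r :=
  Submodule.subset_span ⟨α, β, h, rfl⟩

lemma sum_single_eq_one (i : Fin n) : (∑ j, if j = i then (1:ℕ) else 0) = 1 := by
  simp [Finset.sum_ite_eq]

lemma sum_update_le (α : Fin n → ℕ) (i : Fin n) :
    (∑ j, Function.update α i (α i - 1) j) ≤ ∑ j, α j := by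
  rw [Finset.sum_update_of_mem (Finset.mem_univ i), ← Finset.erase_eq]
  conv_rhs => rw [← Finset.sum_erase_add _ _ (Finset.mem_univ i)]
  omega

lemma mulX_mul_mem (i : Fin n) {r : ℕ} {D : Module.End K (MvPolynomial (Fin n) K)}
    (hD : D ∈ vSpan K n r) : mulX K n i * D ∈ vSpan K n (r + 1) := by
  induction hD using Submodule.span_induction with
  | mem D hD =>
    obtain ⟨α, β, hd, rfl⟩ := hD
    have key : mulX K n i * wMonEnd K n α β
        = wMonEnd K n ((fun j => if j = i then 1 else 0) + α) β := by
      rw [wMonEnd_eq, wMonEnd_eq, xProd_add, xProd_single, mul_assoc]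
    rw [key]
    apply wMonEnd_mem_vSpan
    have : (∑ j, ((fun j => if j = i then (1:ℕ) else 0) + α) j)
        = 1 + ∑ j, α j := by
      simp only [Pi.add_apply]
      rw [Finset.sum_add_distrib, sum_single_eq_one]
    omega
  | zero => rw [mul_zero]; exact Submodule.zero_mem _
  | add x y _ _ hx hy => rw [mul_add]; exact Submodule.add_mem _ hx hy
  | smul k x _ hx => rw [mul_smul_comm]; exact Submodule.smul_mem _ _ hx

lemma pdOp_mul_mem (i : Fin n) {r : ℕ} {D : Module.End K (MvPolynomial (Fin n) K)}
    (hD : D ∈ vSpan K n r) : pdOp K n i * D ∈ vSpan K n (r + 1) := by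
  induction hD using Submodule.span_induction with
  | mem D hD =>
    obtain ⟨α, β, hd, rfl⟩ := hD
    have key : pdOp K n i * wMonEnd K n α β
        = wMonEnd K n α ((fun j => if j = i then 1 else 0) + β)
          + (α i : K) • wMonEnd K n (Function.update α i (α i - 1)) β := by
      rw [wMonEnd_eq, wMonEnd_eq, wMonEnd_eq, ← mul_assoc, pdOp_mul_xProd, add_mul,
        smul_mul_assoc, mul_assoc, dProd_add, dProd_single]
    rw [key]
    apply Submodule.add_mem
    · apply wMonEnd_mem_vSpan
      have : (∑ j, ((fun j => if j = i then (1:ℕ) else 0) + β) j) = 1 + ∑ j, β j := by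
        simp only [Pi.add_apply]
        rw [Finset.sum_add_distrib, sum_single_eq_one]
      omega
    · apply Submodule.smul_mem
      apply wMonEnd_mem_vSpan
      have := sum_update_le n α i
      omega
  | zero => rw [mul_zero]; exact Submodule.zero_mem _
  | add x y _ _ hx hy => rw [mul_add]; exact Submodule.add_mem _ hx hy
  | smul k x _ hx => rw [mul_smul_comm]; exact Submodule.smul_mem _ _ hx

lemma decompose_nonzero_sum {β : Fin n → ℕ} {k : ℕ} (hk : (∑ i, β i) = k + 1) :
    ∃ (i : Fin n) (β' : Fin n → ℕ), β = (fun j => if j = i then 1 else 0) + β'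
      ∧ (∑ i, β' i) = k := by
  have : ∃ i ∈ Finset.univ, β i ≠ 0 := by
    by_contra hc
    push_neg at hc
    rw [Finset.sum_eq_zero (fun i hi => hc i hi)] at hk
    omega
  obtain ⟨i, -, hi⟩ := this
  refine ⟨i, Function.update β i (β i - 1), ?_, ?_⟩
  · funext j
    simp only [Pi.add_apply]
    by_cases hj : j = i
    · subst hj; rw [Function.update_self, if_pos rfl]; omega
    · rw [Function.update_of_ne hj, if_neg hj, zero_add]
  · have h1 : (∑ j, Function.update β i (β i - 1) j)
        = (β i - 1) + ∑ j ∈ Finset.univ.erase i, β j := by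
      rw [Finset.sum_update_of_mem (Finset.mem_univ i), ← Finset.erase_eq]
    have h2 : (∑ j, β j) = β i + ∑ j ∈ Finset.univ.erase i, β j := by
      conv_lhs => rw [← Finset.sum_erase_add _ _ (Finset.mem_univ i)]
      omega
    omega

lemma dProd_mul_mem : ∀ (k : ℕ) (β : Fin n → ℕ), (∑ i, β i) = k →
    ∀ (r : ℕ) (D : Module.End K (MvPolynomial (Fin n) K)), D ∈ vSpan K n r →
    dProd K n β * D ∈ vSpan K n (r + k) := by
  intro k
  induction k with
  | zero =>
    intro β hβ r D hD
    have : β = fun _ => 0 := by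
      funext i
      exact Finset.sum_eq_zero_iff.mp hβ i (Finset.mem_univ i)
    rw [this, dProd_zero, one_mul, Nat.add_zero]
    exact hD
  | succ k IH =>
    intro β hβ r D hD
    obtain ⟨i, β', hdec, hsum⟩ := decompose_nonzero_sum n hβ
    rw [hdec, dProd_add, dProd_single, mul_assoc]
    have h1 := IH β' hsum r D hD
    have h2 := pdOp_mul_mem K n i h1
    have : r + k + 1 = r + (k + 1) := by omega
    rwa [this] at h2

lemma xProd_mul_mem : ∀ (k : ℕ) (α : Fin n → ℕ), (∑ i, α i) = k →
    ∀ (r : ℕ) (D : Module.End K (MvPolynomial (Fin n) K)), D ∈ vSpan K n r →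
    xProd K n α * D ∈ vSpan K n (r + k) := by
  intro k
  induction k with
  | zero =>
    intro α hα r D hD
    have : α = fun _ => 0 := by
      funext i
      exact Finset.sum_eq_zero_iff.mp hα i (Finset.mem_univ i)
    rw [this, xProd_zero, one_mul, Nat.add_zero]
    exact hD
  | succ k IH =>
    intro α hα r D hD
    obtain ⟨i, α', hdec, hsum⟩ := decompose_nonzero_sum n hα
    rw [hdec, xProd_add, xProd_single, mul_assoc]
    have h1 := IH α' hsum r D hD
    have h2 := mulX_mul_mem K n i h1
    have : r + k + 1 = r + (k + 1) := by omega
    rwa [this] at h2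

lemma vSpan_mul {r c : ℕ} {D E : Module.End K (MvPolynomial (Fin n) K)}
    (hD : D ∈ vSpan K n r) (hE : E ∈ vSpan K n c) : D * E ∈ vSpan K n (r + c) := by
  induction hD using Submodule.span_induction with
  | mem D hD =>
    obtain ⟨α, β, hd, rfl⟩ := hD
    rw [wMonEnd_eq, mul_assoc]
    have h1 := dProd_mul_mem K n (∑ i, β i) β rfl c E hE
    have h2 := xProd_mul_mem K n (∑ i, α i) α rfl _ _ h1
    apply vSpan_mono K n _ h2
    omega
  | zero => rw [zero_mul]; exact Submodule.zero_mem _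
  | add x y _ _ hx hy => rw [add_mul]; exact Submodule.add_mem _ hx hy
  | smul k x _ hx => rw [smul_mul_assoc]; exact Submodule.smul_mem _ _ hx

lemma one_mem_vSpan : (1 : Module.End K (MvPolynomial (Fin n) K)) ∈ vSpan K n 0 := by
  have : (1 : Module.End K (MvPolynomial (Fin n) K)) = wMonEnd K n (fun _ => 0) (fun _ => 0) := by
    rw [wMonEnd_eq, xProd_zero, dProd_zero, one_mul]
  rw [this]
  exact wMonEnd_mem_vSpan K n (by simp)

lemma weyl_exists_vSpan {D : Module.End K (MvPolynomial (Fin n) K)}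
    (hD : D ∈ WeylAlgebra K n) : ∃ r, D ∈ vSpan K n r := by
  induction hD using Algebra.adjoin_induction with
  | mem x hx =>
    refine ⟨1, ?_⟩
    rcases hx with ⟨i, rfl⟩ | ⟨i, rfl⟩
    · have : mulX K n i = wMonEnd K n (fun j => if j = i then 1 else 0) (fun _ => 0) := by
        rw [wMonEnd_eq, dProd_zero, mul_one, xProd_single]
      rw [this]
      exact wMonEnd_mem_vSpan K n (by simp [sum_single_eq_one])
    · have : pdOp K n i = wMonEnd K n (fun _ => 0) (fun j => if j = i then 1 else 0) := by
        rw [wMonEnd_eq, xProd_zero, one_mul, dProd_single]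
      rw [this]
      exact wMonEnd_mem_vSpan K n (by simp [sum_single_eq_one])
  | algebraMap k =>
    refine ⟨0, ?_⟩
    rw [Algebra.algebraMap_eq_smul_one]
    exact Submodule.smul_mem _ _ (one_mem_vSpan K n)
  | add x y _ _ hx hy =>
    obtain ⟨r, hr⟩ := hx
    obtain ⟨c, hc⟩ := hy
    exact ⟨max r c, Submodule.add_mem _ (vSpan_mono K n (le_max_left _ _) hr)
      (vSpan_mono K n (le_max_right _ _) hc)⟩
  | mul x y _ _ hx hy =>
    obtain ⟨r, hr⟩ := hx
    obtain ⟨c, hc⟩ := hy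
    exact ⟨r + c, vSpan_mul K n hr hc⟩

lemma mem_bernW_iff {D : WeylAlgebra K n} {r : ℕ} :
    D ∈ bernW K n r ↔ (D : Module.End K (MvPolynomial (Fin n) K)) ∈ vSpan K n r := by
  have himg : (WeylAlgebra K n).val.toLinearMap ''
      {D : WeylAlgebra K n | ∃ α β : Fin n → ℕ,
        (∑ i, α i) + (∑ i, β i) ≤ r ∧ D = wMon K n α β}
      = {D : Module.End K (MvPolynomial (Fin n) K) | ∃ α β : Fin n → ℕ,
        (∑ i, α i) + (∑ i, β i) ≤ r ∧ D = wMonEnd K n α β} := by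
    ext E
    constructor
    · rintro ⟨D, ⟨α, β, hd, rfl⟩, rfl⟩
      exact ⟨α, β, hd, rfl⟩
    · rintro ⟨α, β, hd, rfl⟩
      exact ⟨wMon K n α β, ⟨α, β, hd, rfl⟩, rfl⟩
  constructor
  · intro h
    have := Submodule.mem_map_of_mem (f := (WeylAlgebra K n).val.toLinearMap) h
    rw [bernW, Submodule.map_span, himg] at this
    exact this
  · intro h
    have hinj : Function.Injective (WeylAlgebra K n).val.toLinearMap := Subtype.val_injective
    rw [vSpan, ← himg, ← Submodule.map_span] at h
    obtain ⟨y, hy, heq⟩ := h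
    rwa [hinj heq] at hy

lemma bernW_mono {r r' : ℕ} (h : r ≤ r') : bernW K n r ≤ bernW K n r' := by
  intro D hD
  rw [mem_bernW_iff] at hD ⊢
  exact vSpan_mono K n h hD

lemma bernW_mul {r c : ℕ} {D E : WeylAlgebra K n}
    (hD : D ∈ bernW K n r) (hE : E ∈ bernW K n c) : D * E ∈ bernW K n (r + c) := by
  rw [mem_bernW_iff] at hD hE ⊢
  exact vSpan_mul K n hD hE

lemma exists_bernW (D : WeylAlgebra K n) : ∃ r, D ∈ bernW K n r := by
  obtain ⟨r, hr⟩ := weyl_exists_vSpan K n D.2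
  exact ⟨r, (mem_bernW_iff K n).mpr hr⟩

lemma wMon_mem_bernW {α β : Fin n → ℕ} {r : ℕ} (h : (∑ i, α i) + (∑ i, β i) ≤ r) :
    wMon K n α β ∈ bernW K n r :=
  Submodule.subset_span ⟨α, β, h, rfl⟩

end Sec4d

section Sec3
variable (K : Type*) [Field K] (n : ℕ) (M : Type*) [AddCommGroup M]
    [Module (WeylAlgebra K n) M] [Module K M] [IsScalarTower K (WeylAlgebra K n) M]
    (m : ℕ) (g : Fin m → M)

lemma biFil_finite (r s : ℕ) : FiniteDimensional K (biFil K n M m g r s) := by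
  apply FiniteDimensional.span_of_finite
  have hA : (((Set.univ.pi fun _ : Fin n => Set.Iic r) ×ˢ
      ((Set.univ.pi fun _ : Fin n => Set.Iic s) ×ˢ (Set.univ : Set (Fin m))))).Finite :=
    ((Set.Finite.pi fun _ => Set.finite_Iic r)).prod
      (((Set.Finite.pi fun _ => Set.finite_Iic s)).prod (Set.finite_univ))
  apply Set.Finite.subset (hA.image (fun z => wMon K n z.1 z.2.1 • g z.2.2))
  rintro x ⟨α, β, j, hα, hβ, rfl⟩
  refine ⟨⟨α, β, j⟩, ⟨?_, ?_, trivial⟩, rfl⟩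
  · intro i _
    exact le_trans (Finset.single_le_sum (fun i _ => Nat.zero_le (α i)) (Finset.mem_univ i)) hα
  · intro i _
    exact le_trans (Finset.single_le_sum (fun i _ => Nat.zero_le (β i)) (Finset.mem_univ i)) hβ

lemma bernFil_finite (r : ℕ) : FiniteDimensional K (bernFil K n M m g r) := by
  apply FiniteDimensional.span_of_finite
  have hA : (((Set.univ.pi fun _ : Fin n => Set.Iic r) ×ˢ
      ((Set.univ.pi fun _ : Fin n => Set.Iic r) ×ˢ (Set.univ : Set (Fin m))))).Finite :=
    ((Set.Finite.pi fun _ => Set.finite_Iic r)).prod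
      (((Set.Finite.pi fun _ => Set.finite_Iic r)).prod (Set.finite_univ))
  apply Set.Finite.subset (hA.image (fun z => wMon K n z.1 z.2.1 • g z.2.2))
  rintro x ⟨α, β, j, hαβ, rfl⟩
  refine ⟨⟨α, β, j⟩, ⟨?_, ?_, trivial⟩, rfl⟩
  · intro i _
    exact le_trans (Finset.single_le_sum (fun i _ => Nat.zero_le (α i)) (Finset.mem_univ i))
      (le_trans (Nat.le_add_right _ _) hαβ)
  · intro i _
    exact le_trans (Finset.single_le_sum (fun i _ => Nat.zero_le (β i)) (Finset.mem_univ i))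
      (le_trans (Nat.le_add_left _ _) hαβ)

lemma bernFil_mono {r r' : ℕ} (h : r ≤ r') : bernFil K n M m g r ≤ bernFil K n M m g r' := by
  apply Submodule.span_mono
  rintro x ⟨α, β, j, hαβ, rfl⟩
  exact ⟨α, β, j, le_trans hαβ h, rfl⟩

lemma bernFil_le_biFil (r : ℕ) : bernFil K n M m g r ≤ biFil K n M m g r r := by
  apply Submodule.span_mono
  rintro x ⟨α, β, j, hαβ, rfl⟩
  exact ⟨α, β, j, le_trans (Nat.le_add_right _ _) hαβ,
    le_trans (Nat.le_add_left _ _) hαβ, rfl⟩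

lemma biFil_le_bernFil (r s : ℕ) : biFil K n M m g r s ≤ bernFil K n M m g (r + s) := by
  apply Submodule.span_mono
  rintro x ⟨α, β, j, hα, hβ, rfl⟩
  exact ⟨α, β, j, Nat.add_le_add hα hβ, rfl⟩

end Sec3

section Sec5
variable (K : Type*) [Field K] (n : ℕ) (M : Type*) [AddCommGroup M]
    [Module (WeylAlgebra K n) M] [Module K M] [IsScalarTower K (WeylAlgebra K n) M]

lemma smulKA (D : WeylAlgebra K n) (k : K) (x : M) : D • (k • x) = k • (D • x) := by
  calc D • (k • x) = D • ((k • (1 : WeylAlgebra K n)) • x) := by rw [smul_one_smul]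
    _ = (D * (k • (1 : WeylAlgebra K n))) • x := by rw [smul_smul]
    _ = (k • (D * 1)) • x := by rw [mul_smul_comm]
    _ = (k • D) • x := by rw [mul_one]
    _ = k • (D • x) := smul_assoc k D x

variable (m : ℕ) (g : Fin m → M)

lemma bernW_smul_mem {t : ℕ} {D : WeylAlgebra K n} (hD : D ∈ bernW K n t) (j : Fin m) :
    D • g j ∈ bernFil K n M m g t := by
  induction hD using Submodule.span_induction with
  | mem D hD =>
    obtain ⟨α, β, hd, rfl⟩ := hD
    exact Submodule.subset_span ⟨α, β, j, hd, rfl⟩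
  | zero => rw [zero_smul]; exact Submodule.zero_mem _
  | add x y _ _ hx hy => rw [add_smul]; exact Submodule.add_mem _ hx hy
  | smul k x _ hx => rw [smul_assoc]; exact Submodule.smul_mem _ _ hx

lemma bernW_smul_bernFil {r c : ℕ} {D : WeylAlgebra K n} {x : M}
    (hD : D ∈ bernW K n r) (hx : x ∈ bernFil K n M m g c) :
    D • x ∈ bernFil K n M m g (r + c) := by
  induction hx using Submodule.span_induction with
  | mem x hx =>
    obtain ⟨γ, δ, j, hd, rfl⟩ := hx
    rw [smul_smul]
    apply bernW_smul_mem
    have h1 : wMon K n γ δ ∈ bernW K n ((∑ i, γ i) + (∑ i, δ i)) :=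
      wMon_mem_bernW K n le_rfl
    have h2 := bernW_mul K n hD h1
    exact bernW_mono K n (by omega) h2
  | zero => rw [smul_zero]; exact Submodule.zero_mem _
  | add x y _ _ hx hy => rw [smul_add]; exact Submodule.add_mem _ hx hy
  | smul k x _ hx => rw [smulKA]; exact Submodule.smul_mem _ _ hx

lemma exists_mem_bernFil (hgen : Submodule.span (WeylAlgebra K n) (Set.range g) = ⊤)
    (y : M) : ∃ c, y ∈ bernFil K n M m g c := by
  have hy : y ∈ Submodule.span (WeylAlgebra K n) (Set.range g) := by
    rw [hgen]; exact Submodule.mem_top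
  rw [Submodule.mem_span_range_iff_exists_fun] at hy
  obtain ⟨c, hc⟩ := hy
  choose rk hrk using fun k => exists_bernW K n (c k)
  refine ⟨Finset.univ.sup rk, ?_⟩
  rw [← hc]
  apply Submodule.sum_mem
  intro k _
  exact bernW_smul_mem K n M m g
    (bernW_mono K n (Finset.le_sup (Finset.mem_univ k)) (hrk k)) k

lemma bernFil_transfer {p : ℕ} (g' : Fin p → M) {c : ℕ}
    (hc : ∀ j, g' j ∈ bernFil K n M m g c) (r : ℕ) :
    bernFil K n M p g' r ≤ bernFil K n M m g (r + c) := by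
  rw [bernFil, Submodule.span_le]
  rintro x ⟨α, β, j, hd, rfl⟩
  exact bernW_smul_bernFil K n M m g (wMon_mem_bernW K n hd) (hc j)

/-- Invariance of the Bernstein degree under change of generators (one inequality). -/
lemma psi_deg_le {p : ℕ} (g' : Fin p → M)
    (hgen : Submodule.span (WeylAlgebra K n) (Set.range g) = ⊤)
    (ψ ψ' : Polynomial ℚ) (r₀ r₀' : ℕ)
    (hψ : ∀ r : ℕ, r₀ ≤ r → ψ.eval (r : ℚ) = Module.finrank K (bernFil K n M m g r))
    (hψ' : ∀ r : ℕ, r₀' ≤ r → ψ'.eval (r : ℚ) = Module.finrank K (bernFil K n M p g' r)) :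
    ψ'.natDegree ≤ ψ.natDegree := by
  -- find c with g' j ∈ bernFil g c for all j
  have hex : ∀ j, ∃ c, g' j ∈ bernFil K n M m g c :=
    fun j => exists_mem_bernFil K n M m g hgen (g' j)
  choose cj hcj using hex
  set c := Finset.univ.sup cj with hcdef
  have hc : ∀ j, g' j ∈ bernFil K n M m g c := by
    intro j
    exact bernFil_mono K n M m g (Finset.le_sup (Finset.mem_univ j)) (hcj j)
  set q : Polynomial ℚ := ψ.comp (Polynomial.X + Polynomial.C (c : ℚ)) with hq
  have hqdeg : q.natDegree = ψ.natDegree := by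
    rw [hq, Polynomial.natDegree_comp, Polynomial.natDegree_X_add_C, mul_one]
  rw [← hqdeg]
  apply auxDEG ψ' q (max r₀ r₀')
  intro k hk
  have hk1 : r₀' ≤ k := le_trans (le_max_right _ _) hk
  have hk2 : r₀ ≤ k + c := le_trans (le_max_left _ _) (le_trans hk (Nat.le_add_right _ _))
  have e1 : ψ'.eval (k : ℚ) = Module.finrank K (bernFil K n M p g' k) := hψ' k hk1
  have e2 : ψ.eval ((k + c : ℕ) : ℚ) = Module.finrank K (bernFil K n M m g (k + c)) :=
    hψ (k + c) hk2
  have e3 : q.eval (k : ℚ) = ψ.eval ((k + c : ℕ) : ℚ) := by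
    rw [hq, Polynomial.eval_comp]
    push_cast
    simp
  constructor
  · rw [e1]; positivity
  · rw [e1, e3, e2]
    have : FiniteDimensional K (bernFil K n M m g (k + c)) := bernFil_finite K n M m g _
    have hle := Submodule.finrank_mono
      (bernFil_transfer K n M m g g' hc k)
    exact_mod_cast hle

end Sec5

/-- If `φ_M(t₁,t₂)` and `ψ_M(t)` are the bivariate
characteristic polynomial and the Bernstein polynomial associated with the
same finite system of generators of `M`, then
`ψ_M(r) ≤ φ_M(r,r) ≤ ψ_M(2r)` for all sufficiently large `r`; consequently
`deg ψ_M = deg φ_M`, and (for `M ≠ 0`) `M ∈ 𝓑ₙ` iff `deg φ_M = n`. -/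
theorem characteristic_vs_bernstein
    (K : Type*) [Field K] [CharZero K] (n : ℕ) (hn : 1 ≤ n)
    (M : Type*) [AddCommGroup M] [Module (WeylAlgebra K n) M]
    [Module K M] [IsScalarTower K (WeylAlgebra K n) M]
    (m : ℕ) (g : Fin m → M)
    (hgen : Submodule.span (WeylAlgebra K n) (Set.range g) = ⊤)
    (ψ : Polynomial ℚ)
    (hψ : ∃ r₀ : ℕ, ∀ r : ℕ, r₀ ≤ r →
      ψ.eval (r : ℚ) = Module.finrank K (bernFil K n M m g r))
    (φ : MvPolynomial (Fin 2) ℚ)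
    (hφ : ∃ r₀ s₀ : ℕ, ∀ r s : ℕ, r₀ ≤ r → s₀ ≤ s →
      MvPolynomial.eval ![(r : ℚ), (s : ℚ)] φ =
        Module.finrank K (biFil K n M m g r s)) :
    (∃ r₀ : ℕ, ∀ r : ℕ, r₀ ≤ r →
      ψ.eval (r : ℚ) ≤ MvPolynomial.eval ![(r : ℚ), (r : ℚ)] φ ∧
      MvPolynomial.eval ![(r : ℚ), (r : ℚ)] φ ≤ ψ.eval ((2 * r : ℕ) : ℚ)) ∧
    ψ.natDegree = φ.totalDegree ∧
    ((∃ x : M, x ≠ 0) → (InBernsteinClass K n M ↔ φ.totalDegree = n)) := by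
  obtain ⟨rψ, hψe⟩ := hψ
  obtain ⟨rφ, sφ, hφe⟩ := hφ
  set N := max rψ (max rφ sφ) with hN
  -- the sandwich inequalities
  have sandwich : ∀ r : ℕ, N ≤ r →
      ψ.eval (r : ℚ) ≤ MvPolynomial.eval ![(r : ℚ), (r : ℚ)] φ ∧
      MvPolynomial.eval ![(r : ℚ), (r : ℚ)] φ ≤ ψ.eval ((2 * r : ℕ) : ℚ) := by
    intro r hr
    have hrψ : rψ ≤ r := le_trans (le_max_left _ _) hr
    have hrφ : rφ ≤ r := le_trans (le_trans (le_max_left _ _) (le_max_right _ _)) hr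
    have hsφ : sφ ≤ r := le_trans (le_trans (le_max_right _ _) (le_max_right _ _)) hr
    have e1 := hψe r hrψ
    have e2 := hφe r r hrφ hsφ
    have e3 := hψe (2 * r) (le_trans hrψ (by omega))
    haveI := biFil_finite K n M m g r r
    haveI := bernFil_finite K n M m g (2 * r)
    constructor
    · rw [e1, e2]
      exact_mod_cast Submodule.finrank_mono (bernFil_le_biFil K n M m g r)
    · rw [e2, e3]
      have hsub : biFil K n M m g r r ≤ bernFil K n M m g (2 * r) := by
        have := biFil_le_bernFil K n M m g r r
        rwa [(by omega : r + r = 2 * r)] at this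
      exact_mod_cast Submodule.finrank_mono hsub
  have hψ_nonneg : ∀ r : ℕ, rψ ≤ r → 0 ≤ ψ.eval (r : ℚ) := by
    intro r hr
    rw [hψe r hr]
    positivity
  have hdeg : ψ.natDegree = φ.totalDegree := by
    by_cases hφ0 : φ = 0
    · -- φ = 0 : then ψ vanishes at all large naturals, so ψ = 0
      subst hφ0
      have hz : ∀ r : ℕ, N ≤ r → ψ.eval (r : ℚ) = 0 := by
        intro r hr
        have h1 := (sandwich r hr).1
        have h2 := hψ_nonneg r (le_trans (le_max_left _ _) hr)
        simp only [map_zero] at h1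
        linarith
      rw [auxZERO ψ N hz]
      simp
    · apply le_antisymm
      · -- ψ deg ≤ totalDegree, via the diagonal substitution with u = 1
        apply le_trans (auxDEG ψ (substDiag 1 φ) N ?_) (substDiag_natDegree_le 1 φ)
        intro k hk
        have h1 := (sandwich k hk).1
        have h2 := hψ_nonneg k (le_trans (le_max_left _ _) hk)
        have h3 : (substDiag 1 φ).eval (k : ℚ) = MvPolynomial.eval ![(k : ℚ), (k : ℚ)] φ := by
          rw [substDiag_eval]
          norm_num
        rw [h3]
        exact ⟨h2, h1⟩
      · -- totalDegree ≤ ψ deg, via a generic line through the grid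
        obtain ⟨u, hu1, hune⟩ := exists_good_u φ hφ0
        set p := substDiag u φ with hp
        have hpdeg : p.natDegree = φ.totalDegree :=
          le_antisymm (substDiag_natDegree_le u φ) (Polynomial.le_natDegree_of_ne_zero hune)
        set Ψ : Polynomial ℚ := ψ.comp (Polynomial.C ((u : ℚ) + 1) * Polynomial.X) with hΨ
        have hΨdeg : Ψ.natDegree = ψ.natDegree := by
          rw [hΨ, Polynomial.natDegree_comp, Polynomial.natDegree_C_mul_X _ (by positivity),
            mul_one]
        rw [← hpdeg, ← hΨdeg]
        apply auxDEG p Ψ N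
        intro k hk
        have hrφ : rφ ≤ u * k :=
          le_trans (le_trans (le_trans (le_max_left _ _) (le_max_right _ _)) hk)
            (Nat.le_mul_of_pos_left k hu1)
        have hsφ : sφ ≤ k := le_trans (le_trans (le_max_right _ _) (le_max_right _ _)) hk
        have e2 := hφe (u * k) k hrφ hsφ
        have hcast : ((u * k : ℕ) : ℚ) = (u : ℚ) * (k : ℚ) := by push_cast; ring
        rw [hcast] at e2
        have e1 : p.eval (k : ℚ) = MvPolynomial.eval ![(u : ℚ) * (k : ℚ), (k : ℚ)] φ :=
          substDiag_eval u φ (k : ℚ)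
        have hrψ2 : rψ ≤ (u + 1) * k := by
          have : rψ ≤ k := le_trans (le_max_left _ _) hk
          nlinarith
        have e3 := hψe ((u + 1) * k) hrψ2
        have e4 : Ψ.eval (k : ℚ) = ψ.eval (((u + 1) * k : ℕ) : ℚ) := by
          rw [hΨ, Polynomial.eval_comp, Polynomial.eval_mul, Polynomial.eval_C,
            Polynomial.eval_X]
          congr 1
          push_cast
          ring
        constructor
        · rw [e1, e2]; positivity
        · rw [e1, e2, e4, e3]
          haveI := bernFil_finite K n M m g ((u + 1) * k)
          have hsub : biFil K n M m g (u * k) k ≤ bernFil K n M m g ((u + 1) * k) := by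
            have := biFil_le_bernFil K n M m g (u * k) k
            rwa [(by ring : u * k + k = (u + 1) * k)] at this
          exact_mod_cast Submodule.finrank_mono hsub
  refine ⟨⟨N, sandwich⟩, hdeg, ?_⟩
  intro _
  constructor
  · rintro ⟨p, g', ψ', hgen', ⟨r₀', hψ'e⟩, hdeg'⟩
    have h1 : ψ'.natDegree ≤ ψ.natDegree :=
      psi_deg_le K n M m g g' hgen ψ ψ' rψ r₀' hψe hψ'e
    have h2 : ψ.natDegree ≤ ψ'.natDegree :=
      psi_deg_le K n M p g' g hgen' ψ' ψ r₀' rψ hψ'e hψe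
    rw [← hdeg, le_antisymm h2 h1]
    exact hdeg'
  · intro hdn
    exact ⟨m, g, ψ, hgen, ⟨rψ, hψe⟩, by rw [hdeg]; exact hdn⟩
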